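/- arXiv:0706.1800 — 2 statements merged into one kernel-verified Lean document; each statement's English description precedes it below -/
import Mathlib

section
/- Let A be a skew shape and let λ be a partition in the support of A. Then rows(A) ⊴ λ ⊴ cols(A)^t in the (extended) dominance order, where rows(A) is the partition of row lengths of A, cols(A) is the partition of column lengths of A, and cols(A)^t is the transpose (conjugate) of cols(A). -/
open Finset

/-- The weakly decreasing rearrangement of a finite sequence (list) of natural numbers,
i.e. the partition obtained by sorting its parts into weakly decreasing order. -/
def sortDesc (l : List ℕ) : List ℕ := l.mergeSort (fun a b => b ≤ a)

/-- The (extended) dominance order on partitions, represented as weakly decreasing lists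
of natural numbers (parts beyond the length of the list are taken to be `0`):
`Dom a b` means `a ⊴ b`, i.e. `a₁ + ⋯ + a_k ≤ b₁ + ⋯ + b_k` for all `k`. -/
def Dom (a b : List ℕ) : Prop := ∀ k : ℕ, (a.take k).sum ≤ (b.take k).sum

/-- The conjugate (transpose) of a partition given as a list of natural numbers:
the `j`-th entry (0-indexed) is the number of parts that are `> j`. -/
def conj (l : List ℕ) : List ℕ :=
  (List.range (l.foldr max 0)).map (fun j => (l.filter (fun x => j < x)).length)

/-- A skew shape `λ/μ`: a pair of Young diagrams `μ ⊆ λ`. -/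
structure SkewShape where
  outer : YoungDiagram
  inner : YoungDiagram
  le : inner ≤ outer

namespace SkewShape

/-- The cells (boxes) of a skew shape: boxes of the outer diagram not in the inner one. -/
def cells (A : SkewShape) : Finset (ℕ × ℕ) := A.outer.cells \ A.inner.cells

/-- The number of rows of (the outer shape of) a skew shape. -/
def numRows (A : SkewShape) : ℕ := A.outer.colLen 0

/-- The number of columns of (the outer shape of) a skew shape. -/
def numCols (A : SkewShape) : ℕ := A.outer.rowLen 0

/-- `A.overlap k i` is the number of columns occupied in common by the `k` consecutive
rows `i, i+1, …, i+k-1` of the skew shape `A` (rows indexed from 0). -/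
def overlap (A : SkewShape) (k i : ℕ) : ℕ :=
  ((Finset.range A.numCols).filter (fun j => ∀ t, t < k → (i + t, j) ∈ A.cells)).card

/-- `rows_k(A)`: the weakly decreasing rearrangement of the row-overlap numbers
`(overlap k 0, overlap k 1, …)`; zero parts are discarded (a partition is identified
with its zero-padded versions).  `A.rowsK 1` is the partition of row lengths of `A`. -/
def rowsK (A : SkewShape) (k : ℕ) : List ℕ :=
  sortDesc (((List.range (A.numRows + 1 - k)).map (A.overlap k)).filter (fun x => 0 < x))

/-- The transpose (conjugate) of a skew shape. -/
def transpose (A : SkewShape) : SkewShape :=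
  ⟨A.outer.transpose, A.inner.transpose, YoungDiagram.transpose_mono A.le⟩

/-- `cols_l(A)`: the weakly decreasing rearrangement of the column-overlap numbers of `A`;
`A.colsK 1` is the partition of column lengths of `A`. -/
def colsK (A : SkewShape) (l : ℕ) : List ℕ := A.transpose.rowsK l

/-- `rects k l A` is the number of `k × l` rectangular subdiagrams (contiguous `k × l`
blocks of boxes) contained inside the skew shape `A`, recorded by the position of
their top-left corner. -/
def rects (A : SkewShape) (k l : ℕ) : ℕ :=
  (((Finset.range A.numRows) ×ˢ (Finset.range A.numCols)).filter
    (fun p => ∀ t, t < k → ∀ u, u < l → (p.1 + t, p.2 + u) ∈ A.cells)).card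

end SkewShape

/-- A semistandard Young tableau of skew shape `A`: a filling of the boxes of `A`
with positive integers, weakly increasing along rows and strictly increasing down
columns (entries outside `A` are recorded as `0`). -/
structure SkewSsyt (A : SkewShape) where
  entry : ℕ → ℕ → ℕ
  pos : ∀ i j, (i, j) ∈ A.cells → 1 ≤ entry i j
  zeros : ∀ i j, (i, j) ∉ A.cells → entry i j = 0
  row_weak : ∀ i j1 j2, j1 ≤ j2 → (i, j1) ∈ A.cells → (i, j2) ∈ A.cells →
      entry i j1 ≤ entry i j2
  col_strict : ∀ i1 i2 j, i1 < i2 → (i1, j) ∈ A.cells → (i2, j) ∈ A.cells →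
      entry i1 j < entry i2 j

/-- The number of boxes of `T` filled with the entry `v`. -/
def contentCount {A : SkewShape} (T : SkewSsyt A) (v : ℕ) : ℕ :=
  (A.cells.filter (fun c => T.entry c.1 c.2 = v)).card

/-- `T` has content `ν` (a partition written as a list, 0-indexed: `ν.getD v 0` is the
`(v+1)`-st part): the number of entries equal to `v + 1` is the `(v+1)`-st part of `ν`. -/
def HasContent {A : SkewShape} (T : SkewSsyt A) (ν : List ℕ) : Prop :=
  ∀ v : ℕ, contentCount T (v + 1) = ν.getD v 0

/-- `readBefore c c'` : the box `c` comes strictly before the box `c'` in the reverse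
reading order (rows top to bottom, each row read right to left). -/
def readBefore (c c' : ℕ × ℕ) : Prop := c.1 < c'.1 ∨ (c.1 = c'.1 ∧ c'.2 < c.2)

instance (c c' : ℕ × ℕ) : Decidable (readBefore c c') := by
  unfold readBefore; infer_instance

/-- `T` is a Littlewood–Richardson filling: its reverse reading word is a lattice word,
i.e. at every box `c` carrying an entry `v + 2`, the number of occurrences of `v + 2`
read so far (weakly up to `c`) is at most the number of occurrences of `v + 1` read
strictly before `c`. -/
def IsLR {A : SkewShape} (T : SkewSsyt A) : Prop :=
  ∀ c ∈ A.cells, ∀ v : ℕ, T.entry c.1 c.2 = v + 2 →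
    (A.cells.filter (fun c' => T.entry c'.1 c'.2 = v + 2 ∧ (readBefore c' c ∨ c' = c))).card ≤
    (A.cells.filter (fun c' => T.entry c'.1 c'.2 = v + 1 ∧ readBefore c' c)).card

/-- The support of the skew Schur function `s_A`: by the Littlewood–Richardson rule,
the set of partitions `ν` (weakly decreasing lists) admitting an LR filling of `A`
of content `ν`, i.e. those `ν` with `s_ν` appearing with nonzero coefficient in `s_A`. -/
def SkewShape.support (A : SkewShape) : Set (List ℕ) :=
  { ν | ν.Pairwise (· ≥ ·) ∧ ∃ T : SkewSsyt A, IsLR T ∧ HasContent T ν }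

/-- The coefficient of the Schur function `s_ν` in the Schur expansion of `s_A`:
by the Littlewood–Richardson rule, the number of LR fillings of `A` of content `ν`. -/
noncomputable def lrCoeff (A : SkewShape) (ν : List ℕ) : ℕ :=
  Nat.card { T : SkewSsyt A // IsLR T ∧ HasContent T ν }

/-- `s_A − s_B` is Schur-positive: every coefficient in the Schur expansion of the
difference is nonnegative, i.e. (by the LR rule) each LR coefficient of `B` is at most
the corresponding one of `A`. -/
def SchurPositiveDiff (A B : SkewShape) : Prop :=
  ∀ ν : List ℕ, ν.Pairwise (· ≥ ·) → lrCoeff B ν ≤ lrCoeff A ν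

/-- The skew Schur function `s_A = Σ_T x^T`, as a formal power series in the variables
`x_0, x_1, x_2, …` (variable `x_v` recording entries equal to `v + 1`): the coefficient
of the monomial with exponents `d` is the number of SSYT of shape `A` and content `d`. -/
noncomputable def skewSchur (A : SkewShape) : MvPowerSeries ℕ ℤ :=
  fun d => (Nat.card { T : SkewSsyt A // ∀ v : ℕ, contentCount T (v + 1) = d v } : ℤ)

/-- The boxes remaining after deleting the top box of every non-empty column of `A`:
a box survives iff there is a box of `A` directly above it. -/
def trimCells (A : SkewShape) : Finset (ℕ × ℕ) :=
  A.cells.filter (fun c => 1 ≤ c.1 ∧ (c.1 - 1, c.2) ∈ A.cells)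

/-- The set of boxes of the skew shape `A ∗ B`, obtained by positioning `B` immediately
below and to the left of `A` so that `A` and `B` share no common row or column. -/
def starCells (A B : SkewShape) : Finset (ℕ × ℕ) :=
  A.cells.image (fun c => (c.1, c.2 + B.numCols)) ∪
    B.cells.image (fun c => (c.1 + A.numRows, c.2))

/-- The straight shape (partition) `μ`, viewed as the skew shape `μ/(0)`. -/
def ofYD (μ : YoungDiagram) : SkewShape := ⟨μ, ⊥, bot_le⟩

/-- The list of parts `(μ_k, μ_{k+1}, …, μ_l)` (1-indexed) of a partition `μ` given as a
Young diagram, parts beyond the length of `μ` being `0`. -/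
def tailParts (μ : YoungDiagram) (k l : ℕ) : List ℕ :=
  (List.range (l + 1 - k)).map (fun t => μ.rowLen (k - 1 + t))


section AuxProof

/-- r-th smallest element (0-indexed) of a finset of naturals. -/
def fnth (s : Finset ℕ) (r : ℕ) : ℕ := (s.sort (· ≤ ·)).getD r 0

lemma fnth_eq_get {s : Finset ℕ} {r : ℕ} (h : r < s.card) :
    fnth s r = (s.sort (· ≤ ·)).get ⟨r, by rwa [Finset.length_sort]⟩ := by
  unfold fnth
  rw [List.getD_eq_getElem _ _ (by rwa [Finset.length_sort])]
  simp

lemma fnth_mem {s : Finset ℕ} {r : ℕ} (h : r < s.card) : fnth s r ∈ s := by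
  rw [fnth_eq_get h]
  exact (Finset.mem_sort _).mp (List.get_mem _ _)

lemma fnth_lt_fnth {s : Finset ℕ} {r r' : ℕ} (h : r < r') (h' : r' < s.card) :
    fnth s r < fnth s r' := by
  rw [fnth_eq_get (h.trans h'), fnth_eq_get h']
  exact (Finset.sortedLT_sort s).pairwise.rel_get_of_lt h

lemma fnth_inj {s : Finset ℕ} {r r' : ℕ} (hr : r < s.card) (hr' : r' < s.card)
    (h : fnth s r = fnth s r') : r = r' := by
  rcases Nat.lt_trichotomy r r' with hh | hh | hh
  · exact absurd h (fnth_lt_fnth hh hr').ne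
  · exact hh
  · exact absurd h.symm (fnth_lt_fnth hh hr).ne

lemma fnth_lt {s : Finset ℕ} {r x : ℕ} (h : r < (s.filter (· < x)).card) : fnth s r < x := by
  have hr : r < s.card := h.trans_le (Finset.card_le_card (Finset.filter_subset _ _))
  by_contra hx
  push_neg at hx
  have key : (s.filter (· < x)).card ≤ (Finset.range r).card := by
    set L := s.sort (· ≤ ·) with hL
    have hlen : L.length = s.card := Finset.length_sort _
    apply Finset.card_le_card_of_injOn (fun y => L.idxOf y)
    · intro y hy
      simp only [Finset.mem_coe, Finset.mem_filter] at hy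
      have hyL : y ∈ L := (Finset.mem_sort _).mpr hy.1
      have hidx : L.idxOf y < L.length := List.idxOf_lt_length_iff.mpr hyL
      simp only [Finset.mem_coe, Finset.mem_range]
      by_contra hge
      push_neg at hge
      have : fnth s r ≤ L.get ⟨L.idxOf y, hidx⟩ := by
        rw [fnth_eq_get hr]
        rcases eq_or_lt_of_le hge with heq | hlt
        · exact le_of_eq (congrArg L.get (Fin.ext heq))
        · exact ((Finset.sortedLT_sort s).pairwise.rel_get_of_lt hlt).le
      rw [List.get_eq_getElem, List.getElem_idxOf hidx] at this
      exact absurd (this.trans_lt hy.2) (not_lt.mpr hx)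
    · intro y hy y' hy' hee
      have hyL : y ∈ L := (Finset.mem_sort _).mpr (Finset.mem_filter.mp hy).1
      have hy'L : y' ∈ L := (Finset.mem_sort _).mpr (Finset.mem_filter.mp hy').1
      have h1 : L[L.idxOf y]'(List.idxOf_lt_length_iff.mpr hyL) = y := List.getElem_idxOf _
      have h2 : L[L.idxOf y']'(List.idxOf_lt_length_iff.mpr hy'L) = y' := List.getElem_idxOf _
      rw [← h1, ← h2]
      simp only [hee]
  rw [Finset.card_range] at key
  omega

lemma take_sum_getD (l : List ℕ) (k : ℕ) :
    (l.take k).sum = ∑ v ∈ Finset.range k, l.getD v 0 := by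
  induction l generalizing k with
  | nil => simp [List.getD]
  | cons a t ih =>
    cases k with
    | zero => simp
    | succ k =>
      rw [Finset.sum_range_succ']
      simp only [List.getD_cons_succ, List.getD_cons_zero, List.take_succ_cons, List.sum_cons,
        ← ih k]
      omega

lemma list_map_range_sum (f : ℕ → ℕ) (K : ℕ) :
    ((List.range K).map f).sum = ∑ j ∈ Finset.range K, f j := by
  induction K with
  | zero => simp
  | succ K ih => rw [List.range_succ, Finset.sum_range_succ]; simp [ih]

lemma filter_length_cons (p : ℕ → Bool) (a : ℕ) (t : List ℕ) :
    ((a :: t).filter p).length = (if p a then 1 else 0) + (t.filter p).length := by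
  by_cases h : p a <;> simp [List.filter_cons, h] <;> omega

lemma sum_min_eq (m : List ℕ) (K : ℕ) :
    (∑ j ∈ Finset.range K, (m.filter (fun x => j < x)).length)
      = (m.map (fun x => min x K)).sum := by
  induction m with
  | nil => simp
  | cons a t ih =>
    simp only [List.map_cons, List.sum_cons, ← ih]
    have : ∀ j, ((a :: t).filter (fun x => decide (j < x))).length
        = (if j < a then 1 else 0) + (t.filter (fun x => decide (j < x))).length := by
      intro j
      by_cases h : j < a <;> simp [List.filter_cons, h] <;> omega
    simp only [this]
    rw [Finset.sum_add_distrib]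
    congr 1
    rw [← Finset.card_filter]
    have : (Finset.range K).filter (fun j => j < a) = Finset.range (min a K) := by
      ext j; simp; omega
    rw [this, Finset.card_range]

lemma le_foldr_max {m : List ℕ} {x : ℕ} (h : x ∈ m) : x ≤ m.foldr max 0 := by
  induction m with
  | nil => simp at h
  | cons a t ih =>
    rcases List.mem_cons.mp h with rfl | h
    · simp [List.foldr_cons]
    · have := ih h; simp [List.foldr_cons]; omega

lemma conj_take_sum (m : List ℕ) (k : ℕ) :
    ((conj m).take k).sum = (m.map (fun x => min x k)).sum := by
  unfold conj
  rw [← List.map_take, List.take_range, list_map_range_sum, sum_min_eq]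
  apply congrArg List.sum
  apply List.map_congr_left
  intro x hx
  have := le_foldr_max hx
  omega

section CellLemmas
variable {A : SkewShape}

lemma mem_outer {c : ℕ × ℕ} (h : c ∈ A.cells) : c ∈ A.outer := by
  have := Finset.mem_sdiff.mp h
  exact (YoungDiagram.mem_cells _).mp this.1

lemma col_lt_numCols {c : ℕ × ℕ} (h : c ∈ A.cells) : c.2 < A.numCols := by
  have h1 : (c.1, c.2) ∈ A.outer := by rw [Prod.mk.eta]; exact mem_outer h
  have h2 := YoungDiagram.mem_iff_lt_rowLen.mp h1
  exact h2.trans_le (A.outer.rowLen_anti 0 c.1 (Nat.zero_le _))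

lemma row_lt_numRows {c : ℕ × ℕ} (h : c ∈ A.cells) : c.1 < A.numRows := by
  have h1 : (c.1, c.2) ∈ A.outer := by rw [Prod.mk.eta]; exact mem_outer h
  have h2 := YoungDiagram.mem_iff_lt_colLen.mp h1
  exact h2.trans_le (A.outer.colLen_anti 0 c.2 (Nat.zero_le _))

/-- linear key realizing the reverse reading order on cells -/
def key (A : SkewShape) (c : ℕ × ℕ) : ℕ := c.1 * (A.numCols + 1) + (A.numCols - c.2)

lemma key_lt_of_readBefore {c c' : ℕ × ℕ} (hc : c.2 < A.numCols) (hc' : c'.2 < A.numCols)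
    (h : readBefore c c') : key A c < key A c' := by
  rcases h with h | ⟨h1, h2⟩
  · calc key A c < (c.1 + 1) * (A.numCols + 1) := by unfold key; ring_nf; omega
    _ ≤ c'.1 * (A.numCols + 1) := Nat.mul_le_mul_right _ h
    _ ≤ key A c' := Nat.le_add_right _ _
  · unfold key; rw [h1]; omega

lemma readBefore_trichot (c c' : ℕ × ℕ) : readBefore c c' ∨ readBefore c' c ∨ c = c' := by
  unfold readBefore
  rcases Nat.lt_trichotomy c.1 c'.1 with h | h | h
  · exact Or.inl (Or.inl h)
  · rcases Nat.lt_trichotomy c.2 c'.2 with h2 | h2 | h2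
    · exact Or.inr (Or.inl (Or.inr ⟨h.symm, h2⟩))
    · exact Or.inr (Or.inr (Prod.ext h h2))
    · exact Or.inl (Or.inr ⟨h, h2⟩)
  · exact Or.inr (Or.inl (Or.inl h))

lemma key_lt_iff {c c' : ℕ × ℕ} (hc : c ∈ A.cells) (hc' : c' ∈ A.cells) :
    key A c < key A c' ↔ readBefore c c' := by
  constructor
  · intro h
    rcases readBefore_trichot c c' with hr | hr | rfl
    · exact hr
    · exact absurd (key_lt_of_readBefore (col_lt_numCols hc') (col_lt_numCols hc) hr)
        (by omega)
    · omega
  · exact key_lt_of_readBefore (col_lt_numCols hc) (col_lt_numCols hc')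

lemma key_inj {c c' : ℕ × ℕ} (hc : c ∈ A.cells) (hc' : c' ∈ A.cells)
    (h : key A c = key A c') : c = c' := by
  rcases readBefore_trichot c c' with hr | hr | hr
  · exact absurd (key_lt_of_readBefore (col_lt_numCols hc) (col_lt_numCols hc') hr) (by omega)
  · exact absurd (key_lt_of_readBefore (col_lt_numCols hc') (col_lt_numCols hc) hr) (by omega)
  · exact hr

end CellLemmas

section Phi
variable {A : SkewShape} (T : SkewSsyt A)

/-- rank of a cell among cells with the same entry, in reverse reading order -/
def rnk (c : ℕ × ℕ) : ℕ :=
  (A.cells.filter (fun c' => T.entry c'.1 c'.2 = T.entry c.1 c.2 ∧ key A c' ≤ key A c)).card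

lemma row_lt_of_readBefore_entry_lt {c d : ℕ × ℕ} (hc : c ∈ A.cells) (hd : d ∈ A.cells)
    (hrb : readBefore d c) (he : T.entry d.1 d.2 < T.entry c.1 c.2) : d.1 < c.1 := by
  rcases hrb with h | ⟨h1, h2⟩
  · exact h
  · exfalso
    have hd' : (c.1, d.2) ∈ A.cells := by
      have : d = (c.1, d.2) := by rw [← h1, Prod.mk.eta]
      rwa [this] at hd
    have := T.row_weak c.1 c.2 d.2 (le_of_lt h2) (by rw [Prod.mk.eta]; exact hc) hd'
    rw [h1] at he
    omega

lemma exists_phi_target (hLR : IsLR T) (c : ℕ × ℕ) (hc : c ∈ A.cells)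
    (h2 : 2 ≤ T.entry c.1 c.2) :
    ∃ d, d ∈ A.cells ∧ T.entry d.1 d.2 = T.entry c.1 c.2 - 1 ∧ d.1 < c.1 ∧
      key A d = fnth ((A.cells.filter
          (fun d' => T.entry d'.1 d'.2 = T.entry c.1 c.2 - 1)).image (key A)) (rnk T c - 1) ∧
      rnk T c ≤ ((A.cells.filter
          (fun d' => T.entry d'.1 d'.2 = T.entry c.1 c.2 - 1)).image (key A)).card := by
  set v := T.entry c.1 c.2 - 2 with hv0
  have hv : T.entry c.1 c.2 = v + 2 := by omega
  have hlr := hLR c hc v hv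
  set Y := A.cells.filter (fun d' => T.entry d'.1 d'.2 = T.entry c.1 c.2 - 1) with hY
  have hYeq : A.cells.filter (fun c' => T.entry c'.1 c'.2 = v + 1 ∧ readBefore c' c)
      = Y.filter (fun d => key A d < key A c) := by
    rw [hY, Finset.filter_filter]
    apply Finset.filter_congr
    intro d hd
    constructor
    · rintro ⟨hde, hrb⟩
      exact ⟨by omega, (key_lt_iff hd hc).mpr hrb⟩
    · rintro ⟨hde, hkl⟩
      exact ⟨by omega, (key_lt_iff hd hc).mp hkl⟩
  have hXeq : A.cells.filter
      (fun c' => T.entry c'.1 c'.2 = v + 2 ∧ (readBefore c' c ∨ c' = c))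
      = A.cells.filter (fun c' => T.entry c'.1 c'.2 = T.entry c.1 c.2 ∧ key A c' ≤ key A c) := by
    apply Finset.filter_congr
    intro d hd
    constructor
    · rintro ⟨hde, hrb | rfl⟩
      · exact ⟨by omega, ((key_lt_iff hd hc).mpr hrb).le⟩
      · exact ⟨by omega, le_rfl⟩
    · rintro ⟨hde, hkl⟩
      refine ⟨by omega, ?_⟩
      rcases lt_or_eq_of_le hkl with h | h
      · exact Or.inl ((key_lt_iff hd hc).mp h)
      · exact Or.inr (key_inj hd hc h)
  rw [hXeq, hYeq] at hlr
  -- hlr : rnk T c ≤ (Y.filter (key < key c)).card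
  have hrnk1 : 1 ≤ rnk T c := by
    apply Finset.card_pos.mpr
    exact ⟨c, Finset.mem_filter.mpr ⟨hc, rfl, le_rfl⟩⟩
  have hinjY : Set.InjOn (key A) ↑Y := fun a ha b hb hab =>
    key_inj (Finset.mem_of_mem_filter _ (by exact_mod_cast ha))
      (Finset.mem_of_mem_filter _ (by exact_mod_cast hb)) hab
  have himgf : (Y.image (key A)).filter (· < key A c)
      = (Y.filter (fun d => key A d < key A c)).image (key A) := by
    rw [Finset.filter_image]
  have hcards : ((Y.image (key A)).filter (· < key A c)).card
      = (Y.filter (fun d => key A d < key A c)).card := by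
    rw [himgf]
    exact Finset.card_image_of_injOn (hinjY.mono (fun x hx => Finset.mem_coe.mpr (Finset.mem_of_mem_filter _ (Finset.mem_coe.mp hx))))
  have hbd : rnk T c ≤ ((Y.image (key A)).filter (· < key A c)).card := by
    rw [hcards]; exact hlr
  have hbd2 : rnk T c ≤ (Y.image (key A)).card :=
    hbd.trans (Finset.card_le_card (Finset.filter_subset _ _))
  have hflt : fnth (Y.image (key A)) (rnk T c - 1) < key A c := fnth_lt (by omega)
  have hfmem : fnth (Y.image (key A)) (rnk T c - 1) ∈ Y.image (key A) := fnth_mem (by omega)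
  obtain ⟨d, hdY, hdkey⟩ := Finset.mem_image.mp hfmem
  have hdc : d ∈ A.cells := Finset.mem_of_mem_filter _ hdY
  have hde : T.entry d.1 d.2 = T.entry c.1 c.2 - 1 := (Finset.mem_filter.mp hdY).2
  have hrb : readBefore d c := (key_lt_iff hdc hc).mp (by rw [hdkey]; exact hflt)
  exact ⟨d, hdc, hde, row_lt_of_readBefore_entry_lt T hc hdc hrb (by omega), hdkey, hbd2⟩

lemma exists_phi (hLR : IsLR T) :
    ∃ φ : ℕ × ℕ → ℕ × ℕ,
      (∀ c ∈ A.cells, 2 ≤ T.entry c.1 c.2 → φ c ∈ A.cells ∧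
         T.entry (φ c).1 (φ c).2 = T.entry c.1 c.2 - 1 ∧ (φ c).1 < c.1) ∧
      (∀ c ∈ A.cells, ∀ c' ∈ A.cells, 2 ≤ T.entry c.1 c.2 → 2 ≤ T.entry c'.1 c'.2 →
         φ c = φ c' → c = c') := by
  have main := exists_phi_target T hLR
  choose! φ hmem hent hrow hkey hbd using main
  refine ⟨φ, fun c hc h2 => ⟨hmem c hc h2, hent c hc h2, hrow c hc h2⟩, ?_⟩
  intro c hc c' hc' h2 h2' heq
  have hce : T.entry c.1 c.2 = T.entry c'.1 c'.2 := by
    have e1 := hent c hc h2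
    have e2 := hent c' hc' h2'
    rw [heq] at e1
    omega
  have hsame : (A.cells.filter (fun d' => T.entry d'.1 d'.2 = T.entry c.1 c.2 - 1)).image (key A)
      = (A.cells.filter (fun d' => T.entry d'.1 d'.2 = T.entry c'.1 c'.2 - 1)).image (key A) := by
    rw [hce]
  have hk1 := hkey c hc h2
  have hk2 := hkey c' hc' h2'
  rw [heq, hk2, ← hsame] at hk1
  -- hk1 : fnth E (rnk c' - 1) = fnth E (rnk c - 1)
  have hb1 := hbd c hc h2
  have hb2 := hbd c' hc' h2'
  rw [← hsame] at hb2
  have hr1 : 1 ≤ rnk T c :=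
    Finset.card_pos.mpr ⟨c, Finset.mem_filter.mpr ⟨hc, rfl, le_rfl⟩⟩
  have hr2 : 1 ≤ rnk T c' :=
    Finset.card_pos.mpr ⟨c', Finset.mem_filter.mpr ⟨hc', rfl, le_rfl⟩⟩
  have hrnkeq : rnk T c = rnk T c' := by
    have := fnth_inj (lt_of_lt_of_le (Nat.sub_lt (by omega) (by omega)) hb2)
      (lt_of_lt_of_le (Nat.sub_lt (by omega) (by omega)) hb1) hk1
    omega
  -- rnk equal and same entry ⇒ same key
  have hkeyeq : key A c = key A c' := by
    rcases Nat.lt_trichotomy (key A c) (key A c') with h | h | h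
    · exfalso
      have hss : A.cells.filter
            (fun d => T.entry d.1 d.2 = T.entry c.1 c.2 ∧ key A d ≤ key A c)
          ⊂ A.cells.filter
            (fun d => T.entry d.1 d.2 = T.entry c'.1 c'.2 ∧ key A d ≤ key A c') := by
        rw [← hce]
        have hsub : A.cells.filter
              (fun d => T.entry d.1 d.2 = T.entry c.1 c.2 ∧ key A d ≤ key A c)
            ⊆ A.cells.filter
              (fun d => T.entry d.1 d.2 = T.entry c.1 c.2 ∧ key A d ≤ key A c') :=
          Finset.monotone_filter_right _ (fun d _ hd => ⟨hd.1, hd.2.trans h.le⟩)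
        refine (Finset.ssubset_iff_of_subset hsub).mpr
          ⟨c', Finset.mem_filter.mpr ⟨hc', hce.symm, le_rfl⟩, ?_⟩
        simp only [Finset.mem_filter, not_and]
        intro _ _
        omega
      have := Finset.card_lt_card hss
      unfold rnk at hrnkeq
      omega
    · exact h
    · exfalso
      have hss : A.cells.filter
            (fun d => T.entry d.1 d.2 = T.entry c'.1 c'.2 ∧ key A d ≤ key A c')
          ⊂ A.cells.filter
            (fun d => T.entry d.1 d.2 = T.entry c.1 c.2 ∧ key A d ≤ key A c) := by
        rw [hce]
        have hsub : A.cells.filter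
              (fun d => T.entry d.1 d.2 = T.entry c'.1 c'.2 ∧ key A d ≤ key A c')
            ⊆ A.cells.filter
              (fun d => T.entry d.1 d.2 = T.entry c'.1 c'.2 ∧ key A d ≤ key A c) :=
          Finset.monotone_filter_right _ (fun d _ hd => ⟨hd.1, hd.2.trans h.le⟩)
        refine (Finset.ssubset_iff_of_subset hsub).mpr
          ⟨c, Finset.mem_filter.mpr ⟨hc, hce, le_rfl⟩, ?_⟩
        simp only [Finset.mem_filter, not_and]
        intro _ _
        omega
      have := Finset.card_lt_card hss
      unfold rnk at hrnkeq
      omega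
  exact key_inj hc hc' hkeyeq

end Phi

section Iter
variable {A : SkewShape} {T : SkewSsyt A} {φ : ℕ × ℕ → ℕ × ℕ}

/-- one-step properties of φ -/
def PhiStep (T : SkewSsyt A) (φ : ℕ × ℕ → ℕ × ℕ) : Prop :=
  ∀ c ∈ A.cells, 2 ≤ T.entry c.1 c.2 → φ c ∈ A.cells ∧
    T.entry (φ c).1 (φ c).2 = T.entry c.1 c.2 - 1 ∧ (φ c).1 < c.1

lemma iter_mem_ent (hp : PhiStep T φ) :
    ∀ j, ∀ c ∈ A.cells, j < T.entry c.1 c.2 →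
      φ^[j] c ∈ A.cells ∧ T.entry (φ^[j] c).1 (φ^[j] c).2 = T.entry c.1 c.2 - j := by
  intro j
  induction j with
  | zero => intro c hc _; exact ⟨by simpa using hc, by simp⟩
  | succ j ih =>
    intro c hc hj
    obtain ⟨h1, h2⟩ := ih c hc (by omega)
    rw [Function.iterate_succ_apply']
    obtain ⟨g1, g2, _⟩ := hp _ h1 (by omega)
    exact ⟨g1, by omega⟩

lemma iter_row_lt (hp : PhiStep T φ) {c : ℕ × ℕ} (hc : c ∈ A.cells) {j j' : ℕ}
    (h1 : j < j') (h2 : j' < T.entry c.1 c.2) : (φ^[j'] c).1 < (φ^[j] c).1 := by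
  induction j' with
  | zero => omega
  | succ j' ih =>
    obtain ⟨m1, m2⟩ := iter_mem_ent hp j' c hc (by omega)
    have step : (φ^[j' + 1] c).1 < (φ^[j'] c).1 := by
      rw [Function.iterate_succ_apply']
      exact (hp _ m1 (by omega)).2.2
    rcases Nat.lt_or_ge j j' with h | h
    · exact step.trans (ih h (by omega))
    · have : j = j' := by omega
      rw [this]; exact step

lemma iter_row_inj (hp : PhiStep T φ) {c : ℕ × ℕ} (hc : c ∈ A.cells) {j j' : ℕ}
    (h1 : j < T.entry c.1 c.2) (h2 : j' < T.entry c.1 c.2)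
    (h : (φ^[j] c).1 = (φ^[j'] c).1) : j = j' := by
  rcases Nat.lt_trichotomy j j' with hh | hh | hh
  · exact absurd h (iter_row_lt hp hc hh h2).ne'
  · exact hh
  · exact absurd h (iter_row_lt hp hc hh h1).ne

lemma iter_inj (hp : PhiStep T φ)
    (hinj : ∀ c ∈ A.cells, ∀ c' ∈ A.cells, 2 ≤ T.entry c.1 c.2 → 2 ≤ T.entry c'.1 c'.2 →
      φ c = φ c' → c = c') :
    ∀ j j' (c c' : ℕ × ℕ), c ∈ A.cells → c' ∈ A.cells → j < T.entry c.1 c.2 →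
      j' < T.entry c'.1 c'.2 → T.entry c.1 c.2 - j = T.entry c'.1 c'.2 - j' → j ≤ j' →
      φ^[j] c = φ^[j'] c' → c = φ^[j' - j] c' := by
  intro j
  induction j with
  | zero =>
    intro j' c c' _ _ _ _ _ _ h
    simpa using h
  | succ j ih =>
    intro j' c c' hc hc' hj hj' hent hle h
    have hj'pos : 1 ≤ j' := by omega
    obtain ⟨j'', rfl⟩ : ∃ j'', j' = j'' + 1 := ⟨j' - 1, by omega⟩
    obtain ⟨m1, m2⟩ := iter_mem_ent hp j c hc (by omega)
    obtain ⟨m1', m2'⟩ := iter_mem_ent hp j'' c' hc' (by omega)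
    rw [Function.iterate_succ_apply', Function.iterate_succ_apply'] at h
    have heq : φ^[j] c = φ^[j''] c' :=
      hinj _ m1 _ m1' (by omega) (by omega) h
    have := ih j'' c c' hc hc' (by omega) (by omega) (by omega) (by omega) heq
    rwa [show j'' + 1 - (j + 1) = j'' - j from by omega]

end Iter

section MainCount
variable {A : SkewShape}

/-- number of chain cells at or above `c` (within entries `> k`) lying in rows of `S` -/
def rankS (T : SkewSsyt A) (φ : ℕ × ℕ → ℕ × ℕ) (S : Finset ℕ) (k : ℕ) (c : ℕ × ℕ) : ℕ :=
  ((Finset.range (T.entry c.1 c.2 - k)).filter (fun t => (φ^[t] c).1 ∈ S)).card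

/-- offsets (among the k ancestors with entries ≤ k) avoiding rows of `S` -/
def USet (T : SkewSsyt A) (φ : ℕ × ℕ → ℕ × ℕ) (S : Finset ℕ) (k : ℕ) (c : ℕ × ℕ) :
    Finset ℕ :=
  (Finset.range k).filter (fun u => (φ^[T.entry c.1 c.2 - k + u] c).1 ∉ S)

def beta (T : SkewSsyt A) (φ : ℕ × ℕ → ℕ × ℕ) (S : Finset ℕ) (k : ℕ) (c : ℕ × ℕ) : ℕ × ℕ :=
  φ^[(T.entry c.1 c.2 - k) + fnth (USet T φ S k c) (rankS T φ S k c - 1)] c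

variable {T : SkewSsyt A} {φ : ℕ × ℕ → ℕ × ℕ} {S : Finset ℕ} {k : ℕ}

lemma rankS_pos {c : ℕ × ℕ} (hcs : c.1 ∈ S) (hck : k < T.entry c.1 c.2) :
    1 ≤ rankS T φ S k c :=
  Finset.card_pos.mpr ⟨0, Finset.mem_filter.mpr
    ⟨Finset.mem_range.mpr (by omega), by simpa using hcs⟩⟩

lemma rank_le_cardU (hp : PhiStep T φ) (hS : S.card ≤ k) {c : ℕ × ℕ} (hc : c ∈ A.cells)
    (hck : k < T.entry c.1 c.2) : rankS T φ S k c ≤ (USet T φ S k c).card := by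
  set E := T.entry c.1 c.2 with hE
  have hW : ((Finset.range k).filter (fun u => (φ^[E - k + u] c).1 ∈ S)).card
      + (USet T φ S k c).card = k := by
    have := Finset.card_filter_add_card_filter_not
      (s := Finset.range k) (p := fun u => (φ^[E - k + u] c).1 ∈ S)
    rw [Finset.card_range] at this
    exact this
  set W := (Finset.range k).filter (fun u => (φ^[E - k + u] c).1 ∈ S) with hWdef
  set R := (Finset.range (E - k)).filter (fun t => (φ^[t] c).1 ∈ S) with hRdef
  set V := R ∪ W.image (fun u => E - k + u) with hVdef
  have hVsub : ∀ t ∈ V, t < E ∧ (φ^[t] c).1 ∈ S := by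
    intro t ht
    rcases Finset.mem_union.mp ht with ht | ht
    · have := Finset.mem_filter.mp ht
      exact ⟨by have := Finset.mem_range.mp this.1; omega, this.2⟩
    · obtain ⟨u, hu, rfl⟩ := Finset.mem_image.mp ht
      have := Finset.mem_filter.mp hu
      exact ⟨by have := Finset.mem_range.mp this.1; omega, this.2⟩
  have hinjV : Set.InjOn (fun t => (φ^[t] c).1) ↑V := by
    intro t ht t' ht' htt
    exact iter_row_inj hp hc (hVsub t (by exact_mod_cast ht)).1
      (hVsub t' (by exact_mod_cast ht')).1 htt
  have hcardV : V.card ≤ S.card := by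
    apply Finset.card_le_card_of_injOn (fun t => (φ^[t] c).1)
      (fun t ht => (hVsub t ht).2) hinjV
  have hdisj : Disjoint R (W.image (fun u => E - k + u)) := by
    rw [Finset.disjoint_left]
    intro t ht ht'
    have h1 := Finset.mem_range.mp (Finset.mem_filter.mp ht).1
    obtain ⟨u, _, rfl⟩ := Finset.mem_image.mp ht'
    omega
  have hcardV2 : V.card = R.card + W.card := by
    rw [hVdef, Finset.card_union_of_disjoint hdisj,
      Finset.card_image_of_injective _ (fun a b hab => by omega)]
  have : rankS T φ S k c = R.card := rfl
  omega

lemma beta_spec (hp : PhiStep T φ) (hS : S.card ≤ k) {c : ℕ × ℕ} (hc : c ∈ A.cells)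
    (hcs : c.1 ∈ S) (hck : k < T.entry c.1 c.2) :
    beta T φ S k c ∈ A.cells ∧
      T.entry (beta T φ S k c).1 (beta T φ S k c).2
        = k - fnth (USet T φ S k c) (rankS T φ S k c - 1) ∧
      (beta T φ S k c).1 ∉ S ∧ fnth (USet T φ S k c) (rankS T φ S k c - 1) < k := by
  have h1 := rankS_pos (φ := φ) hcs hck
  have h2 := rank_le_cardU hp hS hc hck
  have hu : fnth (USet T φ S k c) (rankS T φ S k c - 1) ∈ USet T φ S k c :=
    fnth_mem (by omega)
  have hu' := Finset.mem_filter.mp hu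
  have huk := Finset.mem_range.mp hu'.1
  set u0 := fnth (USet T φ S k c) (rankS T φ S k c - 1) with hu0def
  obtain ⟨m1, m2⟩ := iter_mem_ent hp (T.entry c.1 c.2 - k + u0) c hc (by omega)
  have hbu : beta T φ S k c = φ^[T.entry c.1 c.2 - k + u0] c := rfl
  refine ⟨by rw [hbu]; exact m1, ?_, by rw [hbu]; exact hu'.2, huk⟩
  rw [hbu, m2]
  omega

lemma beta_inj_aux (hp : PhiStep T φ)
    (hinj : ∀ c ∈ A.cells, ∀ c' ∈ A.cells, 2 ≤ T.entry c.1 c.2 → 2 ≤ T.entry c'.1 c'.2 →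
      φ c = φ c' → c = c')
    (hS : S.card ≤ k) {c c' : ℕ × ℕ} (hc : c ∈ A.cells) (hcs : c.1 ∈ S)
    (hck : k < T.entry c.1 c.2) (hc' : c' ∈ A.cells) (hcs' : c'.1 ∈ S)
    (hck' : k < T.entry c'.1 c'.2) (hle : T.entry c.1 c.2 ≤ T.entry c'.1 c'.2)
    (hbb : beta T φ S k c = beta T φ S k c') : c = c' := by
  obtain ⟨_, he1, _, hu1⟩ := beta_spec hp hS hc hcs hck
  obtain ⟨_, he2, _, hu2⟩ := beta_spec hp hS hc' hcs' hck'
  have hueq : fnth (USet T φ S k c) (rankS T φ S k c - 1)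
      = fnth (USet T φ S k c') (rankS T φ S k c' - 1) := by
    have h01 := he1
    rw [hbb] at h01
    omega
  obtain ⟨E, hE⟩ : ∃ x, T.entry c.1 c.2 = x := ⟨_, rfl⟩
  obtain ⟨E', hE'⟩ : ∃ x, T.entry c'.1 c'.2 = x := ⟨_, rfl⟩
  have hiter : φ^[E - k + fnth (USet T φ S k c) (rankS T φ S k c - 1)] c
      = φ^[E' - k + fnth (USet T φ S k c) (rankS T φ S k c - 1)] c' := by
    have b1 : beta T φ S k c
        = φ^[T.entry c.1 c.2 - k + fnth (USet T φ S k c) (rankS T φ S k c - 1)] c := rfl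
    have b2 : beta T φ S k c'
        = φ^[T.entry c'.1 c'.2 - k + fnth (USet T φ S k c') (rankS T φ S k c' - 1)] c' := rfl
    rw [hE] at b1
    rw [hE', ← hueq] at b2
    rw [← b1, ← b2, hbb]
  have hchain := iter_inj hp hinj
    (E - k + fnth (USet T φ S k c) (rankS T φ S k c - 1))
    (E' - k + fnth (USet T φ S k c) (rankS T φ S k c - 1)) c c' hc hc'
    (by omega) (by omega) (by omega) (by omega) hiter
  rw [show E' - k + fnth (USet T φ S k c) (rankS T φ S k c - 1)
      - (E - k + fnth (USet T φ S k c) (rankS T φ S k c - 1)) = E' - E from by omega] at hchain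
  rcases Nat.eq_or_lt_of_le hle with heq | hlt
  · rw [hchain, show E' - E = 0 from by omega]
    simp
  · exfalso
    rw [hE, hE'] at hlt
    have htpos : 1 ≤ E' - E := by omega
    have hcells : ∀ u, φ^[E - k + u] c = φ^[E' - k + u] c' := by
      intro u
      have h0 := congrArg (φ^[E - k + u]) hchain
      rw [← Function.iterate_add_apply,
        show E - k + u + (E' - E) = E' - k + u from by omega] at h0
      exact h0
    -- the two U sets agree
    have hUeq : USet T φ S k c = USet T φ S k c' := by
      apply Finset.ext
      intro u
      simp only [USet, Finset.mem_filter, Finset.mem_range]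
      rw [hE, hE', hcells u]
    -- rank strictly increases along the chain
    have hrank : rankS T φ S k c + 1 ≤ rankS T φ S k c' := by
      have hRc : rankS T φ S k c
          = ((Finset.range (E - k)).filter (fun s => (φ^[s] c).1 ∈ S)).card := by
        simp only [rankS, hE]
      have hRc' : rankS T φ S k c'
          = ((Finset.range (E' - k)).filter (fun s => (φ^[s] c').1 ∈ S)).card := by
        simp only [rankS, hE']
      have hsub : insert 0 (((Finset.range (E - k)).filter
            (fun s => (φ^[s] c).1 ∈ S)).image (fun s => s + (E' - E)))
          ⊆ (Finset.range (E' - k)).filter (fun s => (φ^[s] c').1 ∈ S) := by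
        intro s hs
        rcases Finset.mem_insert.mp hs with rfl | hs
        · exact Finset.mem_filter.mpr ⟨Finset.mem_range.mpr (by omega), by simpa using hcs'⟩
        · obtain ⟨s', hs', rfl⟩ := Finset.mem_image.mp hs
          have hh := Finset.mem_filter.mp hs'
          have hsr := Finset.mem_range.mp hh.1
          refine Finset.mem_filter.mpr ⟨Finset.mem_range.mpr (by omega), ?_⟩
          have h1 : φ^[s'] c = φ^[s' + (E' - E)] c' := by
            rw [Function.iterate_add_apply]
            exact congrArg _ hchain
          rw [← h1]
          exact hh.2
      have hcard := Finset.card_le_card hsub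
      rw [Finset.card_insert_of_notMem (by
          intro hmem
          obtain ⟨s', _, habs⟩ := Finset.mem_image.mp hmem
          omega),
        Finset.card_image_of_injective _ (fun a b hab => by omega)] at hcard
      omega
    -- contradiction via fnth injectivity
    have hb1 := rank_le_cardU hp hS hc hck
    have hb2 := rank_le_cardU hp hS hc' hck'
    have hr1 := rankS_pos (φ := φ) hcs hck
    rw [hUeq] at hueq hb1
    have := fnth_inj (s := USet T φ S k c')
      (r := rankS T φ S k c - 1) (r' := rankS T φ S k c' - 1)
      (by omega) (by omega) hueq
    omega

lemma card_rows_le (hLR : IsLR T) (S : Finset ℕ) (k : ℕ) (hS : S.card ≤ k) :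
    (A.cells.filter (fun c => c.1 ∈ S)).card
      ≤ (A.cells.filter (fun c => T.entry c.1 c.2 ≤ k)).card := by
  obtain ⟨φ, hp', hinj⟩ := exists_phi T hLR
  have hp : PhiStep T φ := hp'
  set X := A.cells.filter (fun c => c.1 ∈ S ∧ k < T.entry c.1 c.2) with hX
  set Y := A.cells.filter (fun c => c.1 ∉ S ∧ T.entry c.1 c.2 ≤ k) with hY
  have hXY : X.card ≤ Y.card := by
    apply Finset.card_le_card_of_injOn (beta T φ S k)
    · intro c hcX
      have hmf := Finset.mem_filter.mp hcX
      obtain ⟨m1, m2, m3, m4⟩ := beta_spec hp hS hmf.1 hmf.2.1 hmf.2.2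
      exact Finset.mem_filter.mpr ⟨m1, m3, by omega⟩
    · intro c hcX c' hcX' hbb
      have h1 := Finset.mem_filter.mp (by exact_mod_cast hcX)
      have h2 := Finset.mem_filter.mp (by exact_mod_cast hcX')
      rcases le_total (T.entry c.1 c.2) (T.entry c'.1 c'.2) with h | h
      · exact beta_inj_aux hp hinj hS h1.1 h1.2.1 h1.2.2 h2.1 h2.2.1 h2.2.2 h hbb
      · exact (beta_inj_aux hp hinj hS h2.1 h2.2.1 h2.2.2 h1.1 h1.2.1 h1.2.2 h hbb.symm).symm
  have s1 : (A.cells.filter (fun c => c.1 ∈ S)).card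
      = (A.cells.filter (fun c => c.1 ∈ S ∧ T.entry c.1 c.2 ≤ k)).card + X.card := by
    have := Finset.card_filter_add_card_filter_not
      (s := A.cells.filter (fun c => c.1 ∈ S)) (p := fun c => T.entry c.1 c.2 ≤ k)
    rw [Finset.filter_filter, Finset.filter_filter] at this
    rw [hX]
    rw [show A.cells.filter (fun c => c.1 ∈ S ∧ k < T.entry c.1 c.2)
      = A.cells.filter (fun c => c.1 ∈ S ∧ ¬ T.entry c.1 c.2 ≤ k) from by
        apply Finset.filter_congr; intro c _; simp [not_le]]
    omega
  have s2 : (A.cells.filter (fun c => T.entry c.1 c.2 ≤ k)).card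
      = (A.cells.filter (fun c => c.1 ∈ S ∧ T.entry c.1 c.2 ≤ k)).card + Y.card := by
    have := Finset.card_filter_add_card_filter_not
      (s := A.cells.filter (fun c => T.entry c.1 c.2 ≤ k)) (p := fun c => c.1 ∈ S)
    rw [Finset.filter_filter, Finset.filter_filter] at this
    rw [hY]
    rw [show A.cells.filter (fun c => c.1 ∈ S ∧ T.entry c.1 c.2 ≤ k)
      = A.cells.filter (fun c => T.entry c.1 c.2 ≤ k ∧ c.1 ∈ S) from by
        apply Finset.filter_congr; intro c _; simp [and_comm],
      show A.cells.filter (fun c => c.1 ∉ S ∧ T.entry c.1 c.2 ≤ k)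
      = A.cells.filter (fun c => T.entry c.1 c.2 ≤ k ∧ ¬ c.1 ∈ S) from by
        apply Finset.filter_congr; intro c _; simp [and_comm]]
    omega
  omega

end MainCount

section Assemble
variable {A : SkewShape} {T : SkewSsyt A}

lemma entry_pos {c : ℕ × ℕ} (hc : c ∈ A.cells) : 1 ≤ T.entry c.1 c.2 :=
  T.pos c.1 c.2 (by rwa [Prod.mk.eta])

lemma content_sum {lam : List ℕ} (hC : HasContent T lam) (k : ℕ) :
    (lam.take k).sum = (A.cells.filter (fun c => T.entry c.1 c.2 ≤ k)).card := by
  rw [take_sum_getD]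
  have h1 : ∀ v ∈ Finset.range k, lam.getD v 0
      = (A.cells.filter (fun c => T.entry c.1 c.2 = v + 1)).card := fun v _ => (hC v).symm
  rw [Finset.sum_congr rfl h1,
    Finset.card_eq_sum_card_fiberwise (f := fun c => T.entry c.1 c.2 - 1)
      (t := Finset.range k) (fun c hcf => by
        have hm := Finset.mem_filter.mp hcf
        have := entry_pos (T := T) hm.1
        have h2 := hm.2
        show T.entry c.1 c.2 - 1 ∈ Finset.range k
        exact Finset.mem_range.mpr (by omega))]
  apply Finset.sum_congr rfl
  intro v hv
  rw [Finset.filter_filter]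
  apply congrArg Finset.card
  apply Finset.ext
  intro c
  simp only [Finset.mem_filter]
  have hvk := Finset.mem_range.mp hv
  constructor
  · rintro ⟨hcm, hce⟩
    have := entry_pos (T := T) hcm
    exact ⟨hcm, by omega, by omega⟩
  · rintro ⟨hcm, hle, hce⟩
    have := entry_pos (T := T) hcm
    exact ⟨hcm, by omega⟩

lemma overlap_one (i : ℕ) : A.overlap 1 i = (A.cells.filter (fun c => c.1 = i)).card := by
  unfold SkewShape.overlap
  refine Finset.card_bij' (fun j _ => (i, j)) (fun c _ => c.2) ?_ ?_ ?_ ?_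
  · intro j hj
    have hm := Finset.mem_filter.mp hj
    have := hm.2 0 (by omega)
    exact Finset.mem_filter.mpr ⟨by simpa using this, rfl⟩
  · intro c hcf
    have hm := Finset.mem_filter.mp hcf
    refine Finset.mem_filter.mpr ⟨Finset.mem_range.mpr (col_lt_numCols hm.1), ?_⟩
    intro t ht
    have ht0 : t = 0 := by omega
    subst ht0
    have heq : ((i + 0 : ℕ), c.2) = c := by rw [← hm.2]; simp
    rw [heq]
    exact hm.1
  · intro j _; rfl
  · intro c hcf
    have hm := Finset.mem_filter.mp hcf
    show ((i : ℕ), c.2) = c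
    exact Prod.ext hm.2.symm rfl

lemma sum_overlap (S : Finset ℕ) :
    ∑ i ∈ S, A.overlap 1 i = (A.cells.filter (fun c => c.1 ∈ S)).card := by
  rw [Finset.card_eq_sum_card_fiberwise (f := Prod.fst) (t := S) (s := A.cells.filter (fun c => c.1 ∈ S))
    (fun c hcf => (Finset.mem_filter.mp hcf).2)]
  apply Finset.sum_congr rfl
  intro i hiS
  rw [overlap_one, Finset.filter_filter]
  apply congrArg Finset.card
  apply Finset.ext
  intro c
  simp only [Finset.mem_filter]
  constructor
  · rintro ⟨h1, h2⟩
    exact ⟨h1, by rw [h2]; exact hiS, h2⟩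
  · rintro ⟨h1, _, h3⟩
    exact ⟨h1, h3⟩

lemma transpose_numRows : A.transpose.numRows = A.numCols :=
  YoungDiagram.colLen_transpose _ _

lemma transpose_numCols : A.transpose.numCols = A.numRows :=
  YoungDiagram.rowLen_transpose _ _

lemma transpose_mem_cells {c : ℕ × ℕ} : c ∈ A.transpose.cells ↔ c.swap ∈ A.cells := by
  simp only [SkewShape.cells, SkewShape.transpose, Finset.mem_sdiff, YoungDiagram.mem_cells,
    YoungDiagram.mem_transpose]

lemma transpose_overlap (j : ℕ) :
    A.transpose.overlap 1 j = (A.cells.filter (fun c => c.2 = j)).card := by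
  unfold SkewShape.overlap
  refine Finset.card_bij' (fun i _ => (i, j)) (fun c _ => c.1) ?_ ?_ ?_ ?_
  · intro i hi
    have hm := Finset.mem_filter.mp hi
    have := hm.2 0 (by omega)
    have h2 : (j, i) ∈ A.transpose.cells := by simpa using this
    have h3 := transpose_mem_cells.mp h2
    exact Finset.mem_filter.mpr ⟨h3, rfl⟩
  · intro c hcf
    have hm := Finset.mem_filter.mp hcf
    refine Finset.mem_filter.mpr ⟨?_, ?_⟩
    · rw [transpose_numCols]
      exact Finset.mem_range.mpr (row_lt_numRows hm.1)
    · intro t ht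
      have ht0 : t = 0 := by omega
      subst ht0
      apply transpose_mem_cells.mpr
      have heq : ((j + 0 : ℕ), c.1).swap = c := by
        rw [Prod.swap_prod_mk, ← hm.2]
        simp
      rw [heq]
      exact hm.1
  · intro i _; rfl
  · intro c hcf
    have hm := Finset.mem_filter.mp hcf
    show (c.1, (j : ℕ)) = c
    exact Prod.ext rfl hm.2.symm

lemma filter_pos_map_min_sum (m : List ℕ) (k : ℕ) :
    ((m.filter (fun x => 0 < x)).map (fun x => min x k)).sum
      = (m.map (fun x => min x k)).sum := by
  induction m with
  | nil => simp
  | cons a t ih =>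
    by_cases h : 0 < a
    · simp [List.filter_cons, h, ih]
    · have ha : a = 0 := by omega
      subst ha
      simp [List.filter_cons, ih]

end Assemble

section Final
variable {A : SkewShape} {T : SkewSsyt A}

lemma dom_rows (hLR : IsLR T) {lam : List ℕ} (hC : HasContent T lam) :
    Dom (A.rowsK 1) lam := by
  intro k
  rw [content_sum hC k]
  have hperm : (A.rowsK 1).Perm
      (((List.range A.numRows).map (A.overlap 1)).filter (fun x => 0 < x)) := by
    have := List.mergeSort_perm
      (((List.range (A.numRows + 1 - 1)).map (A.overlap 1)).filter (fun x => 0 < x))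
      (fun a b => b ≤ a)
    simpa [SkewShape.rowsK, sortDesc] using this
  have hsub : ((A.rowsK 1).take k).Subperm ((List.range A.numRows).map (A.overlap 1)) :=
    ((List.take_sublist _ _).subperm.trans hperm.subperm).trans
      List.filter_sublist.subperm
  obtain ⟨l'', hp2, hsl⟩ := hsub
  obtain ⟨r, hrsub, rfl⟩ := List.sublist_map_iff.mp hsl
  have hnodup : r.Nodup := hrsub.nodup List.nodup_range
  have hlen : r.length ≤ k := by
    have h1 : (r.map (A.overlap 1)).length = ((A.rowsK 1).take k).length := hp2.length_eq
    rw [List.length_map] at h1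
    have h2 : ((A.rowsK 1).take k).length = min k (A.rowsK 1).length := List.length_take
    omega
  set S : Finset ℕ := ⟨(↑r : Multiset ℕ), by exact_mod_cast hnodup⟩ with hSdef
  have hScard : S.card = r.length := by
    simp [hSdef, Finset.card]
  have hsum : ∑ i ∈ S, A.overlap 1 i = ((A.rowsK 1).take k).sum := by
    rw [← hp2.sum_eq]
    show (Multiset.map (A.overlap 1) (↑r : Multiset ℕ)).sum = (r.map (A.overlap 1)).sum
    rw [Multiset.map_coe, Multiset.sum_coe]
  rw [← hsum, sum_overlap]
  exact card_rows_le hLR S k (by omega)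

lemma dom_cols {lam : List ℕ} (hC : HasContent T lam) :
    Dom lam (conj (A.colsK 1)) := by
  intro k
  rw [content_sum hC k, conj_take_sum]
  have hperm : (A.colsK 1).Perm
      (((List.range A.numCols).map (A.transpose.overlap 1)).filter (fun x => 0 < x)) := by
    have := List.mergeSort_perm
      (((List.range (A.transpose.numRows + 1 - 1)).map (A.transpose.overlap 1)).filter
        (fun x => 0 < x)) (fun a b => b ≤ a)
    simpa [SkewShape.colsK, SkewShape.rowsK, sortDesc, transpose_numRows] using this
  have hmapsum : ((A.colsK 1).map (fun x => min x k)).sum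
      = (((List.range A.numCols).map (A.transpose.overlap 1)).map (fun x => min x k)).sum := by
    rw [(hperm.map _).sum_eq, filter_pos_map_min_sum]
  rw [hmapsum, List.map_map, list_map_range_sum]
  simp only [Function.comp]
  rw [Finset.card_eq_sum_card_fiberwise (f := Prod.snd) (t := Finset.range A.numCols)
    (fun c hcf => Finset.mem_range.mpr (col_lt_numCols (Finset.mem_filter.mp hcf).1))]
  apply Finset.sum_le_sum
  intro j hj
  rw [Finset.filter_filter, transpose_overlap]
  apply le_min
  · apply Finset.card_le_card
    intro c hcm
    have hm := Finset.mem_filter.mp hcm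
    exact Finset.mem_filter.mpr ⟨hm.1, hm.2.2⟩
  · calc (A.cells.filter (fun c => T.entry c.1 c.2 ≤ k ∧ c.2 = j)).card
        ≤ (Finset.Icc 1 k).card := by
          apply Finset.card_le_card_of_injOn (fun c => T.entry c.1 c.2)
          · intro c hcm
            have hm := Finset.mem_filter.mp hcm
            exact Finset.mem_Icc.mpr ⟨entry_pos hm.1, hm.2.1⟩
          · intro c hc c' hc' hee
            have hm := Finset.mem_filter.mp (by exact_mod_cast hc :
              c ∈ A.cells.filter (fun c => T.entry c.1 c.2 ≤ k ∧ c.2 = j))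
            have hm' := Finset.mem_filter.mp (by exact_mod_cast hc' :
              c' ∈ A.cells.filter (fun c => T.entry c.1 c.2 ≤ k ∧ c.2 = j))
            have hee' : T.entry c.1 c.2 = T.entry c'.1 c'.2 := hee
            have hcj : (c.1, j) = c := Prod.ext rfl hm.2.2.symm
            have hcj' : (c'.1, j) = c' := Prod.ext rfl hm'.2.2.symm
            rcases Nat.lt_trichotomy c.1 c'.1 with hh | hh | hh
            · exfalso
              have := T.col_strict c.1 c'.1 j hh (by rw [hcj]; exact hm.1)
                (by rw [hcj']; exact hm'.1)
              rw [show T.entry c.1 j = T.entry c.1 c.2 from by rw [hm.2.2],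
                show T.entry c'.1 j = T.entry c'.1 c'.2 from by rw [hm'.2.2]] at this
              omega
            · exact Prod.ext hh (hm.2.2.trans hm'.2.2.symm)
            · exfalso
              have := T.col_strict c'.1 c.1 j hh (by rw [hcj']; exact hm'.1)
                (by rw [hcj]; exact hm.1)
              rw [show T.entry c.1 j = T.entry c.1 c.2 from by rw [hm.2.2],
                show T.entry c'.1 j = T.entry c'.1 c'.2 from by rw [hm'.2.2]] at this
              omega
      _ = k := by rw [Nat.card_Icc]; omega

end Final

end AuxProof

/-- first part of Proposition `pro:extreme_fillings`.
Let `A` be a skew shape and let `λ` be a partition in the support of `A`.  Then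
`rows(A) ⊴ λ ⊴ cols(A)ᵗ` in the (extended) dominance order, where `rows(A)` is the
partition of row lengths of `A`, `cols(A)` is the partition of column lengths of `A`,
and `cols(A)ᵗ` is the transpose (conjugate) of `cols(A)`. -/
theorem support_between_rows_and_colsConj (A : SkewShape) (lam : List ℕ)
    (h : lam ∈ A.support) :
    Dom (A.rowsK 1) lam ∧ Dom lam (conj (A.colsK 1)) := by
  obtain ⟨_, T, hLR, hC⟩ := h
  exact ⟨dom_rows hLR hC, dom_cols hC⟩
end

section
/- For any skew shape A, the partition cols(A)^t (the transpose of the partition of column lengths of A) lies in the support of A; that is, the filling of A obtained by placing the entry i in the i-th highest box of every column of A is a Littlewood–Richardson filling of A of content cols(A)^t, so the upper bound λ ⊴ cols(A)^t on the support of A is attained. -/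
open Finset

section AuxLR

namespace LRaux

/-- Number of cells of column `j` in rows `0..i`. -/
def E (A : SkewShape) (i j : ℕ) : ℕ :=
  ((Finset.range (i+1)).filter (fun r => (r, j) ∈ A.cells)).card

lemma mem_cells_iff {A : SkewShape} {c : ℕ × ℕ} :
    c ∈ A.cells ↔ c ∈ A.outer ∧ c ∉ A.inner := by
  simp [SkewShape.cells, Finset.mem_sdiff, YoungDiagram.mem_cells]

lemma col_contig {A : SkewShape} {i1 i2 r j : ℕ} (h1 : (i1, j) ∈ A.cells)
    (h2 : (i2, j) ∈ A.cells) (hr1 : i1 ≤ r) (hr2 : r ≤ i2) : (r, j) ∈ A.cells := by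
  rw [mem_cells_iff] at h1 h2 ⊢
  constructor
  · rw [YoungDiagram.mem_iff_lt_colLen] at h2 ⊢
    exact lt_of_le_of_lt hr2 h2.1
  · intro hin
    apply h1.2
    rw [YoungDiagram.mem_iff_lt_colLen] at hin ⊢
    exact lt_of_le_of_lt hr1 hin

lemma E_pos {A : SkewShape} {i j : ℕ} (h : (i, j) ∈ A.cells) : 1 ≤ E A i j := by
  rw [Nat.one_le_iff_ne_zero, ← Nat.pos_iff_ne_zero, E, Finset.card_pos]
  exact ⟨i, Finset.mem_filter.2 ⟨Finset.mem_range.2 (Nat.lt_succ_self i), h⟩⟩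

lemma E_strict {A : SkewShape} {i1 i2 j : ℕ} (h1 : (i1, j) ∈ A.cells)
    (h2 : (i2, j) ∈ A.cells) (h : i1 < i2) : E A i1 j < E A i2 j := by
  apply Finset.card_lt_card
  constructor
  · intro r hr
    rw [Finset.mem_filter, Finset.mem_range] at hr ⊢
    exact ⟨lt_of_lt_of_le hr.1 (by omega), hr.2⟩
  · intro hsub
    have hmem : i2 ∈ (Finset.range (i2+1)).filter (fun r => (r, j) ∈ A.cells) :=
      Finset.mem_filter.2 ⟨Finset.mem_range.2 (Nat.lt_succ_self i2), h2⟩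
    have := hsub hmem
    rw [Finset.mem_filter, Finset.mem_range] at this
    omega

lemma E_row_le {A : SkewShape} {i j1 j2 : ℕ} (hj : j1 ≤ j2) (h1 : (i, j1) ∈ A.cells)
    (h2 : (i, j2) ∈ A.cells) : E A i j1 ≤ E A i j2 := by
  apply Finset.card_le_card
  intro r hr
  rw [Finset.mem_filter, Finset.mem_range] at hr ⊢
  refine ⟨hr.1, ?_⟩
  have hr2 := hr.2
  rw [mem_cells_iff] at hr2 h2 ⊢
  constructor
  · rw [YoungDiagram.mem_iff_lt_colLen] at h2 ⊢
    have hri : r < i + 1 := hr.1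
    have := h2.1
    omega
  · intro hin
    apply hr2.2
    rw [YoungDiagram.mem_iff_lt_rowLen] at hin ⊢
    exact lt_of_le_of_lt hj hin

lemma E_pred {A : SkewShape} {i j : ℕ} (h : (i, j) ∈ A.cells) (h2 : 2 ≤ E A i j) :
    1 ≤ i ∧ (i - 1, j) ∈ A.cells ∧ E A (i - 1) j + 1 = E A i j := by
  have h2' : 1 < ((Finset.range (i+1)).filter (fun r => (r, j) ∈ A.cells)).card := h2
  obtain ⟨r, hr, hrne⟩ := Finset.exists_mem_ne h2' i
  rw [Finset.mem_filter, Finset.mem_range] at hr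
  have hri : r < i := by omega
  have hi1 : 1 ≤ i := by omega
  have hmem : (i - 1, j) ∈ A.cells := col_contig hr.2 h (by omega) (by omega)
  refine ⟨hi1, hmem, ?_⟩
  have hrange : Finset.range (i + 1) = insert i (Finset.range (i - 1 + 1)) := by
    ext x; simp only [Finset.mem_range, Finset.mem_insert]; omega
  have hnot : i ∉ (Finset.range (i - 1 + 1)).filter (fun r => (r, j) ∈ A.cells) := by
    simp only [Finset.mem_filter, Finset.mem_range]
    omega
  have key : ((Finset.range (i+1)).filter (fun r => (r, j) ∈ A.cells)).card
      = ((Finset.range (i-1+1)).filter (fun r => (r, j) ∈ A.cells)).card + 1 := by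
    rw [hrange, Finset.filter_insert, if_pos h, Finset.card_insert_of_notMem hnot]
  show ((Finset.range (i-1+1)).filter (fun r => (r, j) ∈ A.cells)).card + 1
      = ((Finset.range (i+1)).filter (fun r => (r, j) ∈ A.cells)).card
  omega

lemma E_exists {A : SkewShape} {j : ℕ} :
    ∀ i, (i, j) ∈ A.cells → ∀ w, w + 1 ≤ E A i j →
      ∃ i', (i', j) ∈ A.cells ∧ E A i' j = w + 1 := by
  intro i
  induction i using Nat.strong_induction_on with
  | _ i ih =>
    intro hmem w hw
    rcases eq_or_lt_of_le hw with heq | hlt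
    · exact ⟨i, hmem, heq.symm⟩
    · obtain ⟨hi1, hmem', hE⟩ := E_pred hmem (by omega)
      exact ih (i - 1) (by omega) hmem' w (by omega)

/-- The number of cells of column `j` of a skew shape. -/
def clen (A : SkewShape) (j : ℕ) : ℕ :=
  ((Finset.range A.numRows).filter (fun r => (r, j) ∈ A.cells)).card

lemma row_lt_numRows {A : SkewShape} {i j : ℕ} (h : (i, j) ∈ A.cells) : i < A.numRows := by
  rw [mem_cells_iff, YoungDiagram.mem_iff_lt_colLen] at h
  exact lt_of_lt_of_le h.1 (A.outer.colLen_anti 0 j (Nat.zero_le j))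

lemma col_lt_numCols {A : SkewShape} {i j : ℕ} (h : (i, j) ∈ A.cells) : j < A.numCols := by
  rw [mem_cells_iff, YoungDiagram.mem_iff_lt_rowLen] at h
  exact lt_of_lt_of_le h.1 (A.outer.rowLen_anti 0 i (Nat.zero_le i))

lemma E_le_clen {A : SkewShape} {i j : ℕ} : E A i j ≤ clen A j := by
  apply Finset.card_le_card
  intro r hr
  rw [Finset.mem_filter] at hr ⊢
  exact ⟨Finset.mem_range.2 (row_lt_numRows hr.2), hr.2⟩

lemma exists_E_eq {A : SkewShape} {j v : ℕ} (h : v < clen A j) :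
    ∃ i, (i, j) ∈ A.cells ∧ E A i j = v + 1 := by
  set S := (Finset.range A.numRows).filter (fun r => (r, j) ∈ A.cells) with hS
  have hcard : v < S.card := h
  have hne : S.Nonempty := by rw [← Finset.card_pos]; omega
  set b0 := S.max' hne with hb0
  have hb0mem : b0 ∈ S := S.max'_mem _
  rw [hS, Finset.mem_filter] at hb0mem
  have hEb : E A b0 j = clen A j := by
    rw [E, clen]
    congr 1
    ext r
    simp only [Finset.mem_filter, Finset.mem_range]
    constructor
    · intro hr; exact ⟨row_lt_numRows hr.2, hr.2⟩
    · intro hr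
      refine ⟨?_, hr.2⟩
      have hrS : r ∈ S := by
        rw [hS, Finset.mem_filter]; exact ⟨Finset.mem_range.2 hr.1, hr.2⟩
      have := S.le_max' r hrS
      omega
  exact E_exists b0 hb0mem.2 v (by omega)

/-- The entry function: `i`-th highest box of each column gets entry `i`. -/
def tabEntry (A : SkewShape) (i j : ℕ) : ℕ :=
  if (i, j) ∈ A.cells then E A i j else 0

/-- The tableau: entry `i` in the `i`-th highest box of each column. -/
def colTab (A : SkewShape) : SkewSsyt A where
  entry := tabEntry A
  pos i j h := by rw [tabEntry, if_pos h]; exact E_pos h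
  zeros i j h := by rw [tabEntry, if_neg h]
  row_weak i j1 j2 hj h1 h2 := by
    rw [tabEntry, tabEntry, if_pos h1, if_pos h2]; exact E_row_le hj h1 h2
  col_strict i1 i2 j h h1 h2 := by
    rw [tabEntry, tabEntry, if_pos h1, if_pos h2]; exact E_strict h1 h2 h

lemma colTab_entry {A : SkewShape} {i j : ℕ} (h : (i, j) ∈ A.cells) :
    (colTab A).entry i j = E A i j := by
  show tabEntry A i j = E A i j
  rw [tabEntry, if_pos h]

lemma contentCount_colTab (A : SkewShape) (v : ℕ) :
    contentCount (colTab A) (v + 1) =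
      ((Finset.range A.numCols).filter (fun j => v < clen A j)).card := by
  rw [contentCount]
  apply Finset.card_bij (fun c _ => c.2)
  · rintro ⟨i, j⟩ hc
    rw [Finset.mem_filter] at hc
    obtain ⟨hmem, hent⟩ := hc
    dsimp only at hent ⊢
    rw [colTab_entry hmem] at hent
    rw [Finset.mem_filter, Finset.mem_range]
    refine ⟨col_lt_numCols hmem, ?_⟩
    show v < clen A j
    have hle := E_le_clen (A := A) (i := i) (j := j)
    omega
  · rintro ⟨i1, j1⟩ h1 ⟨i2, j2⟩ h2 heq
    dsimp only at heq
    subst heq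
    rw [Finset.mem_filter] at h1 h2
    obtain ⟨hm1, he1⟩ := h1
    obtain ⟨hm2, he2⟩ := h2
    dsimp only at he1 he2
    rw [colTab_entry hm1] at he1
    rw [colTab_entry hm2] at he2
    rcases lt_trichotomy i1 i2 with h | h | h
    · have := E_strict hm1 hm2 h; omega
    · simp [h]
    · have := E_strict hm2 hm1 h; omega
  · intro j hj
    rw [Finset.mem_filter, Finset.mem_range] at hj
    have hj2 : v < clen A j := hj.2
    obtain ⟨i, hmem, hE⟩ := exists_E_eq hj2
    refine ⟨(i, j), Finset.mem_filter.2 ⟨hmem, ?_⟩, rfl⟩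
    show (colTab A).entry i j = v + 1
    rw [colTab_entry hmem, hE]

lemma isLR_colTab (A : SkewShape) : IsLR (colTab A) := by
  intro c hc v hent
  apply Finset.card_le_card_of_injOn (fun c' => (c'.1 - 1, c'.2))
  · rintro ⟨i, j⟩ hmem
    rw [Finset.mem_coe, Finset.mem_filter] at hmem ⊢
    obtain ⟨hcell, hE, hpos⟩ := hmem
    dsimp only at hE hpos ⊢
    rw [colTab_entry hcell] at hE
    obtain ⟨hi1, hmem', hE'⟩ := E_pred hcell (by omega)
    have hic : i ≤ c.1 := by
      rcases hpos with h | h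
      · rcases h with h | h
        · exact le_of_lt h
        · exact le_of_eq h.1
      · subst h; exact le_refl _
    refine ⟨hmem', ?_, Or.inl (show i - 1 < c.1 by omega)⟩
    rw [colTab_entry hmem']
    omega
  · rintro ⟨i1, j1⟩ h1 ⟨i2, j2⟩ h2 heq
    simp only [Finset.coe_filter, Set.mem_setOf_eq] at h1 h2
    obtain ⟨hc1, hE1, -⟩ := h1
    obtain ⟨hc2, hE2, -⟩ := h2
    dsimp only at hE1 hE2 heq
    rw [colTab_entry hc1] at hE1
    rw [colTab_entry hc2] at hE2
    have hi1 : 1 ≤ i1 := (E_pred hc1 (by omega)).1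
    have hi2 : 1 ≤ i2 := (E_pred hc2 (by omega)).1
    simp only [Prod.mk.injEq] at heq ⊢
    omega

end LRaux

end AuxLR

namespace LRaux

lemma mem_transpose_cells {A : SkewShape} {c : ℕ × ℕ} :
    c ∈ A.transpose.cells ↔ c.swap ∈ A.cells := by
  rw [mem_cells_iff, mem_cells_iff]
  show (c ∈ A.outer.transpose ∧ c ∉ A.inner.transpose) ↔ _
  rw [YoungDiagram.mem_transpose, YoungDiagram.mem_transpose]

lemma transpose_numRows (A : SkewShape) : A.transpose.numRows = A.numCols := by
  show A.outer.transpose.colLen 0 = A.outer.rowLen 0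
  exact A.outer.colLen_transpose 0

lemma transpose_numCols (A : SkewShape) : A.transpose.numCols = A.numRows := by
  show A.outer.transpose.rowLen 0 = A.outer.colLen 0
  exact A.outer.rowLen_transpose 0

lemma transpose_overlap_one (A : SkewShape) (i : ℕ) :
    A.transpose.overlap 1 i = clen A i := by
  rw [SkewShape.overlap, clen, transpose_numCols]
  congr 1
  apply Finset.filter_congr
  intro j _
  constructor
  · intro h
    have h0 := h 0 Nat.one_pos
    rw [mem_transpose_cells] at h0
    simpa using h0
  · intro h t ht
    have ht0 : t = 0 := by omega
    subst ht0
    rw [mem_transpose_cells]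
    simpa using h

lemma card_filter_range (n : ℕ) (p : ℕ → Prop) [DecidablePred p] :
    ((Finset.range n).filter p).card = (List.range n).countP (fun x => decide (p x)) := by
  rw [List.countP_eq_length_filter]
  rfl

lemma countP_colsK (A : SkewShape) (v : ℕ) :
    (A.colsK 1).countP (fun x => decide (v < x)) =
      ((Finset.range A.numCols).filter (fun j => v < clen A j)).card := by
  rw [SkewShape.colsK, SkewShape.rowsK, sortDesc]
  rw [(List.mergeSort_perm _ _).countP_eq]
  rw [List.countP_filter, Nat.add_sub_cancel, transpose_numRows, List.countP_map,
    card_filter_range]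
  apply List.countP_congr
  intro t _
  simp only [Function.comp_apply, transpose_overlap_one]
  by_cases h : v < clen A t
  · have : 0 < clen A t := by omega
    simp [h, this]
  · simp [h]

lemma le_foldr_max {l : List ℕ} {x : ℕ} (h : x ∈ l) : x ≤ l.foldr max 0 := by
  induction l with
  | nil => simp at h
  | cons a t ih =>
    rcases List.mem_cons.1 h with rfl | h
    · exact le_max_left _ _
    · exact le_trans (ih h) (le_max_right _ _)

lemma conj_getD (l : List ℕ) (v : ℕ) :
    (conj l).getD v 0 = l.countP (fun x => decide (v < x)) := by
  by_cases h : v < l.foldr max 0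
  · have hlen : v < (conj l).length := by
      rw [conj, List.length_map, List.length_range]; exact h
    rw [List.getD_eq_getElem _ _ hlen]
    simp only [conj, List.getElem_map, List.getElem_range, List.countP_eq_length_filter]
  · have hlen : (conj l).length ≤ v := by
      rw [conj, List.length_map, List.length_range]; omega
    rw [List.getD_eq_default _ _ hlen]
    symm
    rw [List.countP_eq_zero]
    intro x hx
    have := le_foldr_max hx
    simp only [decide_eq_true_eq]
    omega

lemma conj_sorted (l : List ℕ) : (conj l).Pairwise (· ≥ ·) := by
  unfold conj
  refine List.Pairwise.map _ ?_ (List.pairwise_lt_range (n := _))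
  intro a b hab
  show (l.filter (fun x => decide (b < x))).length ≤ (l.filter (fun x => decide (a < x))).length
  rw [← List.countP_eq_length_filter, ← List.countP_eq_length_filter]
  apply List.countP_mono_left
  intro x _ hx
  simp only [decide_eq_true_eq] at *
  omega

end LRaux

/-- sharpness of the upper bound in Proposition `pro:extreme_fillings`.
For any skew shape `A`, the partition `cols(A)ᵗ` (the transpose of the partition of
column lengths of `A`) lies in the support of `A`; i.e. `A` has a Littlewood–Richardson
filling of content `cols(A)ᵗ` (obtained by placing the entry `i` in the `i`-th highest
box of every column), so the upper bound `λ ⊴ cols(A)ᵗ` on the support is attained. -/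
theorem colsConj_mem_support (A : SkewShape) :
    conj (A.colsK 1) ∈ A.support := by
  refine ⟨LRaux.conj_sorted _, LRaux.colTab A, LRaux.isLR_colTab A, ?_⟩
  intro v
  rw [LRaux.contentCount_colTab, LRaux.conj_getD, LRaux.countP_colsK]
end
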